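/- Let π ≤ β ≤ 2π, let ψ be the normalized positive solution with c = c_β, set f(θ) = ψ'(θ)/ψ(θ), and let α = (1+√(1−4c_β))/2. If 0 ≤ ω ≤ π/4, then f(θ)·sin θ·cos(θ+ω) + α·cos ω ≥ 0 for all 0 < θ ≤ π/2. -/
import Mathlib


open Real Set Filter
open scoped Classical

/-- `c` solves the Hardy-constant equation for the angle `β`. -/
def hardyEq (c β : ℝ) : Prop :=
  Real.sqrt c * Real.tan (Real.sqrt c * ((β - Real.pi) / 2)) =
    2 * (Real.Gamma ((3 + Real.sqrt (1 - 4 * c)) / 4) /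
         Real.Gamma ((1 + Real.sqrt (1 - 4 * c)) / 4)) ^ 2

/-- `βcr` is the critical angle: the unique angle in `(π, 2π)` with
`tan((βcr − π)/4) = 4 (Γ(3/4)/Γ(1/4))²`. -/
def isBetaCr (βcr : ℝ) : Prop :=
  βcr ∈ Set.Ioo Real.pi (2 * Real.pi) ∧
    Real.tan ((βcr - Real.pi) / 4) = 4 * (Real.Gamma (3 / 4) / Real.Gamma (1 / 4)) ^ 2

/-- `c = c_β`: for `β ≤ βcr`, `c = 1/4`; for `β > βcr`, `c` is the unique solution in
`(0, 1/4]` of the Hardy-constant equation for `β`. -/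
def isHardyConst (βcr β c : ℝ) : Prop :=
  (β ≤ βcr ∧ c = 1 / 4) ∨ (βcr < β ∧ c ∈ Set.Ioc (0 : ℝ) (1 / 4) ∧ hardyEq c β)

/-- The potential `V` on `(0, β)`. -/
noncomputable def Vpot (β θ : ℝ) : ℝ :=
  if θ < Real.pi / 2 then 1 / Real.sin θ ^ 2
  else if θ < β - Real.pi / 2 then 1
  else 1 / Real.sin (β - θ) ^ 2

set_option maxHeartbeats 1000000 in
/-- Let `ψ` be the normalized positive solution (extended symmetrically to `(0, β)`) of
`−ψ'' = c_β·V·ψ` with `ψ'(β/2) = 0` and `ψ(θ)/θ^α → 1` as `θ → 0+`, with `f = ψ'/ψ`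
and `α = (1+√(1−4c_β))/2`.  If `0 ≤ ω ≤ π/4`, then
`f(θ)·sin θ·cos(θ+ω) + α·cos ω ≥ 0` for all `0 < θ ≤ π/2`. -/
theorem f_sin_cos_inequality
    (β βcr cβ α : ℝ) (ψ ψ' : ℝ → ℝ)
    (hβ1 : Real.pi ≤ β) (hβ2 : β ≤ 2 * Real.pi)
    (hβcr : isBetaCr βcr) (hcβ : isHardyConst βcr β cβ)
    (hα : α = (1 + Real.sqrt (1 - 4 * cβ)) / 2)
    (hpos : ∀ θ ∈ Set.Ioo 0 β, 0 < ψ θ)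
    (hder : ∀ θ ∈ Set.Ioo 0 β, HasDerivAt ψ (ψ' θ) θ)
    (hode : ∀ θ ∈ Set.Ioo 0 β, HasDerivAt ψ' (-(cβ * Vpot β θ * ψ θ)) θ)
    (hbc : ψ' (β / 2) = 0)
    (hsym : ∀ θ, ψ (β - θ) = ψ θ)
    (hnorm : Filter.Tendsto (fun θ => ψ θ / θ ^ α) (nhdsWithin 0 (Set.Ioi 0)) (nhds 1))
    (ω : ℝ) (hω1 : 0 ≤ ω) (hω2 : ω ≤ Real.pi / 4) :
    ∀ θ : ℝ, 0 < θ → θ ≤ Real.pi / 2 →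
      0 ≤ (ψ' θ / ψ θ) * Real.sin θ * Real.cos (θ + ω) + α * Real.cos ω := by
  have hπ : (0:ℝ) < π := Real.pi_pos
  have hπ2β : π / 2 < β := by linarith
  have hc0 : 0 < cβ := by
    rcases hcβ with ⟨_, rfl⟩ | ⟨_, hm, _⟩
    · norm_num
    · exact hm.1
  have hc4 : cβ ≤ 1 / 4 := by
    rcases hcβ with ⟨_, rfl⟩ | ⟨_, hm, _⟩
    · norm_num
    · exact hm.2
  have hs_sq : Real.sqrt (1 - 4 * cβ) ^ 2 = 1 - 4 * cβ := Real.sq_sqrt (by linarith)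
  have hs0 : 0 ≤ Real.sqrt (1 - 4 * cβ) := Real.sqrt_nonneg _
  have hs1 : Real.sqrt (1 - 4 * cβ) < 1 := by nlinarith
  have hα2 : 1 / 2 ≤ α := by rw [hα]; linarith
  have hα1 : α < 1 := by rw [hα]; linarith
  have hαc : α * (1 - α) = cβ := by rw [hα]; nlinarith
  -- positivity of the potential
  have hV : ∀ θ ∈ Ioo (0:ℝ) β, 0 < Vpot β θ := by
    intro θ hθ
    unfold Vpot
    split_ifs with h1 h2
    · have hs : 0 < Real.sin θ := Real.sin_pos_of_pos_of_lt_pi hθ.1 (by linarith)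
      positivity
    · norm_num
    · push_neg at h1 h2
      have hs : 0 < Real.sin (β - θ) := by
        apply Real.sin_pos_of_pos_of_lt_pi
        · linarith [hθ.2]
        · linarith
      positivity
  -- V * sin² = 1 on (0, π/2]
  have hVsin : ∀ θ ∈ Ioc (0:ℝ) (π/2), Vpot β θ * Real.sin θ ^ 2 = 1 := by
    intro θ hθ
    rcases lt_or_eq_of_le hθ.2 with h | h
    · have hsθ : Real.sin θ ≠ 0 := ne_of_gt (Real.sin_pos_of_pos_of_lt_pi hθ.1 (by linarith))
      rw [Vpot, if_pos h]
      field_simp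
    · subst h
      rw [Vpot, if_neg (lt_irrefl _)]
      by_cases hb : π / 2 < β - π / 2
      · rw [if_pos hb, Real.sin_pi_div_two]; norm_num
      · rw [if_neg hb]
        have hβπ : β = π := le_antisymm (by push_neg at hb; linarith) hβ1
        rw [hβπ]
        have h2 : π - π / 2 = π / 2 := by ring
        rw [h2, Real.sin_pi_div_two]
        norm_num
  -- ψ' is strictly decreasing, hence nonnegative on (0, π/2]
  have hψ'anti : StrictAntiOn ψ' (Ioo 0 β) := by
    apply strictAntiOn_of_deriv_neg (convex_Ioo 0 β)
    · exact fun θ hθ => (hode θ hθ).continuousAt.continuousWithinAt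
    · intro θ hθ
      rw [interior_Ioo] at hθ
      rw [(hode θ hθ).deriv]
      have h1 := hV θ hθ
      have h2 := hpos θ hθ
      have : 0 < cβ * Vpot β θ * ψ θ := by positivity
      linarith
  have hψ'nonneg : ∀ θ ∈ Ioc (0:ℝ) (π/2), 0 ≤ ψ' θ := by
    intro θ hθ
    have hθβ : θ ∈ Ioo (0:ℝ) β := ⟨hθ.1, lt_of_le_of_lt hθ.2 hπ2β⟩
    have hb2 : β / 2 ∈ Ioo (0:ℝ) β := ⟨by linarith, by linarith⟩
    rcases lt_or_eq_of_le (show θ ≤ β / 2 by linarith [hθ.2]) with h | h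
    · have := hψ'anti hθβ hb2 h
      rw [hbc] at this
      linarith
    · rw [h, hbc]
  have hsub : Ioc (0:ℝ) (π/2) ⊆ Ioo 0 β := fun θ hθ => ⟨hθ.1, lt_of_le_of_lt hθ.2 hπ2β⟩
  -- the logarithmic derivative times sine
  set g : ℝ → ℝ := fun θ => ψ' θ * Real.sin θ / ψ θ with hgdef
  set G : ℝ → ℝ := fun θ =>
    ((-(cβ * Vpot β θ * ψ θ) * Real.sin θ + ψ' θ * Real.cos θ) * ψ θ -
      ψ' θ * Real.sin θ * ψ' θ) / ψ θ ^ 2 with hGdef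
  have hgd : ∀ θ ∈ Ioc (0:ℝ) (π/2), HasDerivAt g (G θ) θ := by
    intro θ hθ
    have hθβ := hsub hθ
    exact ((hode θ hθβ).mul (Real.hasDerivAt_sin θ)).div (hder θ hθβ) (ne_of_gt (hpos θ hθβ))
  have hgca : ∀ θ ∈ Ioc (0:ℝ) (π/2), ContinuousAt g θ := fun θ hθ => (hgd θ hθ).continuousAt
  have hGneg : ∀ θ ∈ Ioc (0:ℝ) (π/2), α ≤ g θ → G θ < 0 := by
    intro θ hθ hg
    have hθβ := hsub hθ
    have hP : 0 < ψ θ := hpos θ hθβ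
    have hS : 0 < Real.sin θ := Real.sin_pos_of_pos_of_lt_pi hθ.1 (by linarith [hθ.2])
    have hC1 : Real.cos θ < 1 := by
      have := Real.strictAntiOn_cos (left_mem_Icc.2 (le_of_lt hπ))
        ⟨le_of_lt hθ.1, by linarith [hθ.2]⟩ hθ.1
      simpa using this
    have hVS := hVsin θ hθ
    have hu : α * ψ θ ≤ ψ' θ * Real.sin θ := (le_div_iff₀ hP).1 hg
    have hupos : 0 < ψ' θ * Real.sin θ := lt_of_lt_of_le (by positivity) hu
    apply div_neg_of_neg_of_pos _ (by positivity)
    have key : Real.sin θ *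
        ((-(cβ * Vpot β θ * ψ θ) * Real.sin θ + ψ' θ * Real.cos θ) * ψ θ -
          ψ' θ * Real.sin θ * ψ' θ) =
        -(cβ * ψ θ ^ 2) + ψ' θ * Real.sin θ * Real.cos θ * ψ θ -
          (ψ' θ * Real.sin θ) ^ 2 := by
      linear_combination (-(cβ * ψ θ ^ 2)) * hVS
    have h2 : 0 ≤ ψ' θ * Real.sin θ - (1 - α) * ψ θ := by nlinarith
    have e1 : ψ' θ * Real.sin θ * Real.cos θ * ψ θ < ψ' θ * Real.sin θ * ψ θ :=
      mul_lt_mul_of_pos_right (mul_lt_of_lt_one_right hupos hC1) hP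
    have e2 : ψ' θ * Real.sin θ * ψ θ - (ψ' θ * Real.sin θ) ^ 2 - cβ * ψ θ ^ 2 ≤ 0 := by
      nlinarith [mul_nonneg (sub_nonneg.2 hu) h2, hαc, sq_nonneg (ψ θ)]
    have hSN : Real.sin θ *
        ((-(cβ * Vpot β θ * ψ θ) * Real.sin θ + ψ' θ * Real.cos θ) * ψ θ -
          ψ' θ * Real.sin θ * ψ' θ) < 0 := by
      rw [key]; linarith [e1, e2]
    by_contra hcon
    push_neg at hcon
    linarith [hSN, mul_nonneg (le_of_lt hS) hcon]
  -- the main bound: g ≤ α on (0, π/2]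
  have hg_le : ∀ θ ∈ Ioc (0:ℝ) (π/2), g θ ≤ α := by
    intro θ0 hθ0
    by_contra hcon
    push_neg at hcon
    by_cases hex : ∃ θ1 ∈ Ioo (0:ℝ) θ0, g θ1 ≤ α
    · obtain ⟨θ1, hθ1, hgθ1⟩ := hex
      set T : Set ℝ := {θ | θ ∈ Icc θ1 θ0 ∧ g θ ≤ α} with hT
      have hθ1T : θ1 ∈ T := ⟨⟨le_refl _, le_of_lt hθ1.2⟩, hgθ1⟩
      have hTne : T.Nonempty := ⟨θ1, hθ1T⟩
      have hTbdd : BddAbove T := ⟨θ0, fun x hx => hx.1.2⟩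
      set θ2 := sSup T with hθ2
      have hθ2mem : θ2 ∈ Icc θ1 θ0 :=
        ⟨le_csSup hTbdd hθ1T, csSup_le hTne fun x hx => hx.1.2⟩
      have hθ2sub : θ2 ∈ Ioc (0:ℝ) (π/2) :=
        ⟨lt_of_lt_of_le hθ1.1 hθ2mem.1, le_trans hθ2mem.2 hθ0.2⟩
      have hgθ2 : g θ2 ≤ α := by
        have hcl : θ2 ∈ closure T := csSup_mem_closure hTne hTbdd
        have hnb : (nhdsWithin θ2 T).NeBot := mem_closure_iff_nhdsWithin_neBot.1 hcl
        have htd : Tendsto g (nhdsWithin θ2 T) (nhds (g θ2)) :=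
          (hgca θ2 hθ2sub).continuousWithinAt
        exact le_of_tendsto htd (eventually_nhdsWithin_of_forall fun x hx => hx.2)
      have hθ2lt : θ2 < θ0 :=
        lt_of_le_of_ne hθ2mem.2 (fun h => by rw [h] at hgθ2; linarith)
      have hmono : StrictAntiOn g (Icc θ2 θ0) := by
        apply strictAntiOn_of_deriv_neg (convex_Icc _ _)
        · intro x hx
          exact (hgca x ⟨lt_of_lt_of_le hθ2sub.1 hx.1,
            le_trans hx.2 hθ0.2⟩).continuousWithinAt
        · intro x hx
          rw [interior_Icc] at hx
          have hxsub : x ∈ Ioc (0:ℝ) (π/2) :=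
            ⟨lt_trans hθ2sub.1 hx.1, le_trans (le_of_lt hx.2) hθ0.2⟩
          rw [(hgd x hxsub).deriv]
          apply hGneg x hxsub
          by_contra hgx
          push_neg at hgx
          have hxT : x ∈ T :=
            ⟨⟨le_trans hθ2mem.1 (le_of_lt hx.1), le_of_lt hx.2⟩, le_of_lt hgx⟩
          have := le_csSup hTbdd hxT
          linarith [hx.1]
      have := hmono (left_mem_Icc.2 (le_of_lt hθ2lt))
        (right_mem_Icc.2 (le_of_lt hθ2lt)) hθ2lt
      linarith
    · push_neg at hex
      have hgall : ∀ x ∈ Ioc (0:ℝ) θ0, α < g x := by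
        intro x hx
        rcases lt_or_eq_of_le hx.2 with h | h
        · exact hex x ⟨hx.1, h⟩
        · rw [h]; exact hcon
      have hmono : StrictAntiOn g (Ioc 0 θ0) := by
        apply strictAntiOn_of_deriv_neg (convex_Ioc _ _)
        · intro x hx
          exact (hgca x ⟨hx.1, le_trans hx.2 hθ0.2⟩).continuousWithinAt
        · intro x hx
          rw [interior_Ioc] at hx
          have hxsub : x ∈ Ioc (0:ℝ) (π/2) := ⟨hx.1, le_trans (le_of_lt hx.2) hθ0.2⟩
          rw [(hgd x hxsub).deriv]
          exact hGneg x hxsub (le_of_lt (hgall x ⟨hx.1, le_of_lt hx.2⟩))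
      set m := g θ0 with hm
      have hmα : α < m := hcon
      have hmθ : ∀ x ∈ Ioc (0:ℝ) θ0, m ≤ g x := by
        intro x hx
        rcases lt_or_eq_of_le hx.2 with h | h
        · exact le_of_lt (hmono hx (right_mem_Ioc.2 hθ0.1) h)
        · rw [h]
      have hkey : ∀ x ∈ Ioc (0:ℝ) θ0, m * ψ x ≤ ψ' x * x := by
        intro x hx
        have hxsub : x ∈ Ioc (0:ℝ) (π/2) := ⟨hx.1, le_trans hx.2 hθ0.2⟩
        have hxβ : x ∈ Ioo (0:ℝ) β := hsub hxsub
        have hP := hpos x hxβ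
        have h1 : m * ψ x ≤ ψ' x * Real.sin x := (le_div_iff₀ hP).1 (hmθ x hx)
        have hψ'x : 0 ≤ ψ' x := hψ'nonneg x hxsub
        have h2 : Real.sin x ≤ x := Real.sin_le (le_of_lt hx.1)
        nlinarith
      set h : ℝ → ℝ := fun x => ψ x / x ^ m with hhdef
      have hhd : ∀ x ∈ Ioo (0:ℝ) θ0,
          HasDerivAt h ((ψ' x * x ^ m - ψ x * (m * x ^ (m - 1))) / (x ^ m) ^ 2) x := by
        intro x hx
        have hxβ : x ∈ Ioo (0:ℝ) β := ⟨hx.1, by linarith [hx.2, hθ0.2]⟩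
        exact (hder x hxβ).div (Real.hasDerivAt_rpow_const (Or.inl (ne_of_gt hx.1)))
          (ne_of_gt (Real.rpow_pos_of_pos hx.1 m))
      have hhmono : MonotoneOn h (Ioc (0:ℝ) θ0) := by
        apply monotoneOn_of_deriv_nonneg (convex_Ioc _ _)
        · intro x hx
          have hxβ : x ∈ Ioo (0:ℝ) β := ⟨hx.1, by linarith [hx.2, hθ0.2]⟩
          exact (((hder x hxβ).continuousAt).div
            ((Real.continuousAt_rpow_const x m (Or.inl (ne_of_gt hx.1))))
            (ne_of_gt (Real.rpow_pos_of_pos hx.1 m))).continuousWithinAt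
        · intro x hx
          rw [interior_Ioc] at hx
          exact (hhd x hx).differentiableAt.differentiableWithinAt
        · intro x hx
          rw [interior_Ioc] at hx
          rw [(hhd x hx).deriv]
          apply div_nonneg _ (sq_nonneg _)
          have hA : 0 < x ^ (m - 1) := Real.rpow_pos_of_pos hx.1 (m - 1)
          have hxm1 : x ^ (m - 1) * x = x ^ m := by
            rw [Real.rpow_sub hx.1, Real.rpow_one]
            exact div_mul_cancel₀ _ (ne_of_gt hx.1)
          have hk := hkey x ⟨hx.1, le_of_lt hx.2⟩
          have hint : 0 ≤ x ^ (m - 1) * (ψ' x * x - m * ψ x) :=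
            mul_nonneg (le_of_lt hA) (by linarith)
          have e : ψ' x * (x ^ (m - 1) * x) = ψ' x * x ^ m := by rw [hxm1]
          nlinarith [hint, e]
      have hθ0Ioc : θ0 ∈ Ioc (0:ℝ) θ0 := right_mem_Ioc.2 hθ0.1
      have hC0 : 0 < h θ0 := by
        have := hpos θ0 (hsub hθ0)
        have := Real.rpow_pos_of_pos hθ0.1 m
        exact div_pos ‹0 < ψ θ0› ‹0 < θ0 ^ m›
      have hbound : ∀ x ∈ Ioo (0:ℝ) θ0, ψ x / x ^ α ≤ h θ0 * x ^ (m - α) := by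
        intro x hx
        have hhx : h x ≤ h θ0 := hhmono ⟨hx.1, le_of_lt hx.2⟩ hθ0Ioc (le_of_lt hx.2)
        have hxm : (0:ℝ) < x ^ m := Real.rpow_pos_of_pos hx.1 m
        have hxα : (0:ℝ) < x ^ α := Real.rpow_pos_of_pos hx.1 α
        have h1 : ψ x ≤ h θ0 * x ^ m := by
          have := (div_le_iff₀ hxm).1 hhx
          linarith
        calc ψ x / x ^ α ≤ h θ0 * x ^ m / x ^ α := by gcongr
          _ = h θ0 * x ^ (m - α) := by
            rw [mul_div_assoc, ← Real.rpow_sub hx.1]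
      have hlim0 : Tendsto (fun x => h θ0 * x ^ (m - α)) (nhdsWithin (0:ℝ) (Set.Ioi 0)) (nhds 0) := by
        have h1 : Tendsto (fun x : ℝ => x ^ (m - α)) (nhds (0:ℝ)) (nhds ((0:ℝ) ^ (m - α))) :=
          (Real.continuousAt_rpow_const 0 (m - α) (Or.inr (by linarith))).tendsto
        rw [Real.zero_rpow (ne_of_gt (by linarith : (0:ℝ) < m - α))] at h1
        have h2 := h1.const_mul (h θ0)
        rw [mul_zero] at h2
        exact h2.mono_left nhdsWithin_le_nhds
      have hsq : Tendsto (fun x => ψ x / x ^ α) (nhdsWithin (0:ℝ) (Set.Ioi 0)) (nhds 0) := by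
        apply tendsto_of_tendsto_of_tendsto_of_le_of_le' tendsto_const_nhds hlim0
        · filter_upwards [Ioo_mem_nhdsGT_of_mem (Set.mem_Ico.2 ⟨le_refl (0:ℝ), hθ0.1⟩)]
            with x hx
          have hP := hpos x ⟨hx.1, by linarith [hx.2, hθ0.2]⟩
          have hxα : (0:ℝ) < x ^ α := Real.rpow_pos_of_pos hx.1 α
          positivity
        · filter_upwards [Ioo_mem_nhdsGT_of_mem (Set.mem_Ico.2 ⟨le_refl (0:ℝ), hθ0.1⟩)]
            with x hx using hbound x hx
      exact absurd (tendsto_nhds_unique hnorm hsq) (by norm_num)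
  -- final assembly
  intro θ hθpos hθle
  have hθβ : θ ∈ Ioo (0:ℝ) β := ⟨hθpos, by linarith⟩
  have hP := hpos θ hθβ
  have hS : 0 < Real.sin θ := Real.sin_pos_of_pos_of_lt_pi hθpos (by linarith)
  have ht0 : 0 ≤ ψ' θ / ψ θ * Real.sin θ :=
    mul_nonneg (div_nonneg (hψ'nonneg θ ⟨hθpos, hθle⟩) (le_of_lt hP)) (le_of_lt hS)
  have htα : ψ' θ / ψ θ * Real.sin θ ≤ α := by
    have h1 := hg_le θ ⟨hθpos, hθle⟩
    calc ψ' θ / ψ θ * Real.sin θ = ψ' θ * Real.sin θ / ψ θ := by ring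
      _ ≤ α := h1
  have hcosθ : 0 ≤ Real.cos θ := Real.cos_nonneg_of_mem_Icc ⟨by linarith, hθle⟩
  have hcosω : 0 ≤ Real.cos ω := Real.cos_nonneg_of_mem_Icc ⟨by linarith, by linarith⟩
  have hsinω : 0 ≤ Real.sin ω := Real.sin_nonneg_of_nonneg_of_le_pi hω1 (by linarith)
  have hsinθ1 : Real.sin θ ≤ 1 := Real.sin_le_one θ
  have hsc : Real.sin ω ≤ Real.cos ω := by
    rw [← Real.sin_pi_div_two_sub]
    exact Real.strictMonoOn_sin.monotoneOn ⟨by linarith, by linarith⟩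
      ⟨by linarith, by linarith⟩ (by linarith)
  rw [Real.cos_add]
  nlinarith [mul_nonneg ht0 (mul_nonneg hcosθ hcosω), mul_nonneg ht0 hsinω,
    mul_nonneg (mul_nonneg ht0 hsinω) (sub_nonneg.2 hsinθ1),
    mul_nonneg ht0 (sub_nonneg.2 hsc), mul_nonneg (sub_nonneg.2 htα) hcosω]
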